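/- Let 1 < p < ∞ and let (u_j) be a normalized block basic sequence of the unit vector basis in the Baernstein space B_p, with m_j = max supp u_j. Then (e_{m_j}) 3^{1/p}-dominates (u_j): for all scalars α_1,...,α_k, ‖Σ_{j=1}^k α_j u_j‖_{B_p} ≤ 3^{1/p} ‖Σ_{j=1}^k α_j e_{m_j}‖_{B_p}. -/

import Mathlib

/-- A Schreier set: a finite set `F` of naturals that is empty or satisfies `|F| ≤ min F`. -/
def IsSchreier (F : Finset ℕ) : Prop := ∀ h : F.Nonempty, F.card ≤ F.min' h

/-- `F < G` for finite sets of naturals: every element of `F` is below every element of `G`. -/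
def FinsetLT (F G : Finset ℕ) : Prop := ∀ a ∈ F, ∀ b ∈ G, a < b

/-- A Schreier chain: a finite collection of nonempty, pairwise consecutive Schreier sets. -/
def IsSchreierChain (C : Finset (Finset ℕ)) : Prop :=
  (∀ F ∈ C, F.Nonempty ∧ IsSchreier F) ∧
    ∀ F ∈ C, ∀ G ∈ C, F ≠ G → FinsetLT F G ∨ FinsetLT G F

/-- The Baernstein norm: `‖x‖_{B_p} = sup_𝒞 (∑_{F ∈ 𝒞} (∑_{n ∈ F} |x n|)^p)^(1/p)`,
the supremum being over all Schreier chains `𝒞`. -/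
noncomputable def baernsteinNorm (p : ℝ) (x : ℕ → ℝ) : ℝ :=
  ⨆ C : {C : Finset (Finset ℕ) // IsSchreierChain C},
    (∑ F ∈ C.1, (∑ n ∈ F, |x n|) ^ p) ^ (1 / p)

lemma isSchreier_subset {F G : Finset ℕ} (h : F ⊆ G) (hG : IsSchreier G) : IsSchreier F := by
  intro hF
  have hGne : G.Nonempty := hF.mono h
  calc F.card ≤ G.card := Finset.card_le_card h
    _ ≤ G.min' hGne := hG hGne
    _ ≤ F.min' hF := Finset.le_min' _ _ _ (fun y hy => Finset.min'_le _ _ (h hy))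

lemma chain_disjoint {C : Finset (Finset ℕ)} (hC : IsSchreierChain C) {F G : Finset ℕ}
    (hF : F ∈ C) (hG : G ∈ C) (hne : F ≠ G) : Disjoint F G := by
  rw [Finset.disjoint_left]
  intro a haF haG
  rcases hC.2 F hF G hG hne with h | h
  · exact lt_irrefl a (h a haF a haG)
  · exact lt_irrefl a (h a haG a haF)

lemma chain_sum_le (p : ℝ) (hp0 : 0 < p) (x : ℕ → ℝ) (S : Finset ℕ)
    (hx : ∀ n, x n ≠ 0 → n ∈ S) {C : Finset (Finset ℕ)} (hC : IsSchreierChain C) :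
    ∑ F ∈ C, (∑ n ∈ F, |x n|) ^ p ≤ (S.card : ℝ) * (∑ n ∈ S, |x n|) ^ p := by
  set C' := C.filter (fun F => (F ∩ S).Nonempty) with hC'
  have hsub : C' ⊆ C := Finset.filter_subset _ _
  have h1 : ∑ F ∈ C, (∑ n ∈ F, |x n|) ^ p = ∑ F ∈ C', (∑ n ∈ F, |x n|) ^ p := by
    refine (Finset.sum_subset hsub ?_).symm
    intro F hF hF'
    have hz : ∑ n ∈ F, |x n| = 0 := by
      refine Finset.sum_eq_zero fun n hn => ?_
      by_contra hne
      have : x n ≠ 0 := fun h => hne (by simp [h])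
      exact hF' (by
        rw [hC', Finset.mem_filter]
        exact ⟨hF, ⟨n, Finset.mem_inter.2 ⟨hn, hx n this⟩⟩⟩)
    rw [hz, Real.zero_rpow (ne_of_gt hp0)]
  rw [h1]
  have h2 : ∀ F ∈ C', (∑ n ∈ F, |x n|) ^ p ≤ (∑ n ∈ S, |x n|) ^ p := by
    intro F hF
    refine Real.rpow_le_rpow (Finset.sum_nonneg fun n _ => abs_nonneg _) ?_ (le_of_lt hp0)
    have : ∑ n ∈ F, |x n| = ∑ n ∈ F ∩ S, |x n| := by
      refine (Finset.sum_subset (Finset.inter_subset_left) ?_).symm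
      intro n hn hn'
      by_contra hne
      have : x n ≠ 0 := fun h => hne (by simp [h])
      exact hn' (Finset.mem_inter.2 ⟨hn, hx n this⟩)
    rw [this]
    exact Finset.sum_le_sum_of_subset_of_nonneg Finset.inter_subset_right
      (fun n _ _ => abs_nonneg _)
  calc ∑ F ∈ C', (∑ n ∈ F, |x n|) ^ p ≤ ∑ _F ∈ C', (∑ n ∈ S, |x n|) ^ p :=
        Finset.sum_le_sum h2
    _ = (C'.card : ℝ) * (∑ n ∈ S, |x n|) ^ p := by rw [Finset.sum_const, nsmul_eq_mul]
    _ ≤ (S.card : ℝ) * (∑ n ∈ S, |x n|) ^ p := by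
        refine mul_le_mul_of_nonneg_right ?_ (Real.rpow_nonneg (Finset.sum_nonneg fun n _ => abs_nonneg _) _)
        have : C'.card ≤ S.card := by
          classical
          set f : Finset ℕ → ℕ := fun F => if h : (F ∩ S).Nonempty then (F ∩ S).min' h else 0
            with hf
          refine Finset.card_le_card_of_injOn f ?_ ?_
          · intro F hF
            rw [hC', Finset.mem_coe, Finset.mem_filter] at hF
            simp only [hf, dif_pos hF.2]
            exact Finset.mem_inter.1 (Finset.min'_mem _ hF.2) |>.2
          · intro F hF G hG hfg
            simp only [hC', Finset.mem_coe, Finset.mem_filter] at hF hG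
            by_contra hne
            have hd := chain_disjoint hC hF.1 hG.1 hne
            have h1 : f F ∈ F := by
              simp only [hf, dif_pos hF.2]
              exact Finset.mem_inter.1 (Finset.min'_mem _ hF.2) |>.1
            have h2 : f G ∈ G := by
              simp only [hf, dif_pos hG.2]
              exact Finset.mem_inter.1 (Finset.min'_mem _ hG.2) |>.1
            rw [hfg] at h1
            exact Finset.disjoint_left.1 hd h1 h2
        exact_mod_cast this

lemma empty_chain : IsSchreierChain (∅ : Finset (Finset ℕ)) := by
  constructor <;> intro F hF <;> simp at hF

instance : Nonempty {C : Finset (Finset ℕ) // IsSchreierChain C} := ⟨⟨∅, empty_chain⟩⟩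

lemma bddAbove_chains (p : ℝ) (hp0 : 0 < p) (x : ℕ → ℝ) (S : Finset ℕ)
    (hx : ∀ n, x n ≠ 0 → n ∈ S) :
    BddAbove (Set.range fun C : {C : Finset (Finset ℕ) // IsSchreierChain C} =>
      (∑ F ∈ C.1, (∑ n ∈ F, |x n|) ^ p) ^ (1 / p)) := by
  refine ⟨((S.card : ℝ) * (∑ n ∈ S, |x n|) ^ p) ^ (1 / p), ?_⟩
  rintro - ⟨C, rfl⟩
  refine Real.rpow_le_rpow (Finset.sum_nonneg fun F _ =>
    Real.rpow_nonneg (Finset.sum_nonneg fun n _ => abs_nonneg _) _) ?_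
    (by positivity)
  exact chain_sum_le p hp0 x S hx C.2

lemma chain_val_le_norm (p : ℝ) (hp0 : 0 < p) (x : ℕ → ℝ) (S : Finset ℕ)
    (hx : ∀ n, x n ≠ 0 → n ∈ S) {C : Finset (Finset ℕ)} (hC : IsSchreierChain C) :
    (∑ F ∈ C, (∑ n ∈ F, |x n|) ^ p) ^ (1 / p) ≤ baernsteinNorm p x :=
  le_ciSup (bddAbove_chains p hp0 x S hx) (⟨C, hC⟩ : {C // IsSchreierChain C})

lemma baernsteinNorm_nonneg (p : ℝ) (hp0 : 0 < p) (x : ℕ → ℝ) (S : Finset ℕ)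
    (hx : ∀ n, x n ≠ 0 → n ∈ S) : 0 ≤ baernsteinNorm p x := by
  have := chain_val_le_norm p hp0 x S hx empty_chain
  simp only [Finset.sum_empty, Real.zero_rpow (by positivity : (1:ℝ)/p ≠ 0)] at this
  exact this

lemma chain_psum_le_norm (p : ℝ) (hp0 : 0 < p) (x : ℕ → ℝ) (S : Finset ℕ)
    (hx : ∀ n, x n ≠ 0 → n ∈ S) {C : Finset (Finset ℕ)} (hC : IsSchreierChain C) :
    ∑ F ∈ C, (∑ n ∈ F, |x n|) ^ p ≤ (baernsteinNorm p x) ^ p := by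
  have h := chain_val_le_norm p hp0 x S hx hC
  have hs : (0:ℝ) ≤ ∑ F ∈ C, (∑ n ∈ F, |x n|) ^ p :=
    Finset.sum_nonneg fun F _ => Real.rpow_nonneg (Finset.sum_nonneg fun n _ => abs_nonneg _) _
  have := Real.rpow_le_rpow (Real.rpow_nonneg hs _) h (le_of_lt hp0)
  rwa [← Real.rpow_mul hs, one_div, inv_mul_cancel₀ (ne_of_gt hp0), Real.rpow_one] at this

lemma singleton_chain {F : Finset ℕ} (hne : F.Nonempty) (hS : IsSchreier F) :
    IsSchreierChain {F} := by
  constructor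
  · intro G hG; rw [Finset.mem_singleton] at hG; subst hG; exact ⟨hne, hS⟩
  · intro G hG G' hG' hne'
    rw [Finset.mem_singleton] at hG hG'
    subst hG; subst hG'; exact absurd rfl hne'

lemma one_le_of_mem_chain {C : Finset (Finset ℕ)} (hC : IsSchreierChain C)
    {F : Finset ℕ} (hF : F ∈ C) {n : ℕ} (hn : n ∈ F) : 1 ≤ n := by
  obtain ⟨hne, hS⟩ := hC.1 F hF
  have h1 : 1 ≤ F.card := Finset.card_pos.2 hne
  have h2 : F.card ≤ F.min' hne := hS hne
  have h3 : F.min' hne ≤ n := Finset.min'_le _ _ hn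
  omega

lemma norm_le_zero_of_high_supp (p : ℝ) (hp0 : 0 < p) (xj : ℕ → ℝ)
    (h : ∀ n, 1 ≤ n → xj n = 0) : baernsteinNorm p xj ≤ 0 := by
  refine ciSup_le fun C => ?_
  have : ∀ F ∈ C.1, (∑ n ∈ F, |xj n|) ^ p = 0 := by
    intro F hF
    have : ∑ n ∈ F, |xj n| = 0 :=
      Finset.sum_eq_zero fun n hn => by
        rw [h n (one_le_of_mem_chain C.2 hF hn), abs_zero]
    rw [this, Real.zero_rpow (ne_of_gt hp0)]
  rw [Finset.sum_eq_zero this, Real.zero_rpow (by positivity : (1:ℝ)/p ≠ 0)]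


/-- Let `1 < p < ∞` and let `(u j)` be a normalized block basic sequence of the unit vector
basis in the Baernstein space `B_p`, with `m j = max (supp (u j))`. Then `(e_{m j})`
`3^(1/p)`-dominates `(u j)`. -/
theorem baernstein_maxSupport_dominates (p : ℝ) (hp : 1 < p)
    (u : ℕ → ℕ → ℝ) (m : ℕ → ℕ)
    (hfin : ∀ j, (Function.support (u j)).Finite)
    (hmax : ∀ j, IsGreatest (Function.support (u j)) (m j))
    (hblock : ∀ j, ∀ i ∈ Function.support (u (j + 1)), m j < i)
    (hnorm : ∀ j, baernsteinNorm p (u j) = 1)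
    (k : ℕ) (α : Fin k → ℝ) :
    baernsteinNorm p (∑ j, α j • u j) ≤
      (3 : ℝ) ^ (1 / p) * baernsteinNorm p (∑ j, α j • (Pi.single (m j) 1 : ℕ → ℝ)) := by
  classical
  have hp0 : 0 < p := lt_trans one_pos hp
  set x : ℕ → ℝ := ∑ j, α j • u j with hxdef
  set y : ℕ → ℝ := ∑ j, α j • (Pi.single (m j) 1 : ℕ → ℝ) with hydef
  -- strict monotonicity of m
  have hm : StrictMono m := by
    refine strictMono_nat_of_lt_succ fun j => ?_
    exact hblock j (m (j+1)) (hmax (j+1)).1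
  -- supports are separated
  have hsupp_lt : ∀ {j j' : ℕ}, j < j' → ∀ n ∈ Function.support (u j),
      ∀ n' ∈ Function.support (u j'), n < n' := by
    intro j j' hjj' n hn n' hn'
    have h1 : n ≤ m j := (hmax j).2 hn
    obtain ⟨j'', rfl⟩ : ∃ j'', j' = j'' + 1 := ⟨j' - 1, by omega⟩
    have h2 : m j'' < n' := hblock j'' n' hn'
    have h3 : m j ≤ m j'' := hm.monotone (by omega)
    omega
  have huniq : ∀ (n : ℕ) (j j' : ℕ), u j n ≠ 0 → u j' n ≠ 0 → j = j' := by
    intro n j j' h h'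
    by_contra hne
    rcases Nat.lt_or_ge j j' with hlt | hge
    · exact lt_irrefl n (hsupp_lt hlt n h n h')
    · have hlt : j' < j := by omega
      exact lt_irrefl n (hsupp_lt hlt n h' n h)
  -- m j ≥ 1
  have hm1 : ∀ j : ℕ, 1 ≤ m j := by
    intro j
    by_contra hc
    have hmj : m j = 0 := by omega
    have : baernsteinNorm p (u j) ≤ 0 := by
      refine norm_le_zero_of_high_supp p hp0 (u j) fun n hn => ?_
      by_contra hne
      have := (hmax j).2 (show n ∈ Function.support (u j) from hne)
      omega
    rw [hnorm j] at this; linarith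
  -- support finsets
  set Sx : Finset ℕ := Finset.univ.biUnion (fun j : Fin k => (hfin j).toFinset) with hSx
  have hxsupp : ∀ n, x n ≠ 0 → n ∈ Sx := by
    intro n hn
    rw [hxdef] at hn
    rw [Finset.sum_apply] at hn
    obtain ⟨j, -, hj⟩ := Finset.exists_ne_zero_of_sum_ne_zero hn
    rw [Pi.smul_apply, smul_eq_mul] at hj
    have : u (j:ℕ) n ≠ 0 := fun h => hj (by rw [h, mul_zero])
    exact Finset.mem_biUnion.2 ⟨j, Finset.mem_univ _, (hfin _).mem_toFinset.2 this⟩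
  set Sy : Finset ℕ := Finset.univ.image (fun j : Fin k => m j) with hSy
  have hysupp : ∀ n, y n ≠ 0 → n ∈ Sy := by
    intro n hn
    rw [hydef, Finset.sum_apply] at hn
    obtain ⟨j, -, hj⟩ := Finset.exists_ne_zero_of_sum_ne_zero hn
    rw [Pi.smul_apply, smul_eq_mul] at hj
    have : (Pi.single (m (j:ℕ)) (1:ℝ) : ℕ → ℝ) n ≠ 0 := by
      intro h
      rw [h] at hj
      rw [mul_zero] at hj
      exact hj rfl
    have hnm : n = m (j:ℕ) := by
      by_contra hne
      exact this (Pi.single_eq_of_ne hne 1)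
    exact Finset.mem_image.2 ⟨j, Finset.mem_univ _, hnm.symm⟩
  have hy_eval : ∀ j : Fin k, y (m (j:ℕ)) = α j := by
    intro j
    rw [hydef, Finset.sum_apply]
    rw [Finset.sum_eq_single_of_mem j (Finset.mem_univ _)]
    · rw [Pi.smul_apply, smul_eq_mul, Pi.single_eq_same, mul_one]
    · intro b _ hb
      rw [Pi.smul_apply, smul_eq_mul, Pi.single_eq_of_ne, mul_zero]
      intro h
      exact hb (Fin.ext (hm.injective h.symm))
  have hNy : 0 ≤ baernsteinNorm p y := baernsteinNorm_nonneg p hp0 y Sy hysupp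
  -- main chain estimate
  have hmain : ∀ C : Finset (Finset ℕ), IsSchreierChain C →
      ∑ F ∈ C, (∑ n ∈ F, |x n|) ^ p ≤ 3 * (baernsteinNorm p y) ^ p := by
    intro C hC
    -- the per-block mass of a chain set
    set t : Finset ℕ → Fin k → ℝ := fun F j => ∑ n ∈ F, |u (j:ℕ) n| with htdef
    have ht_nonneg : ∀ F j, 0 ≤ t F j := fun F j => Finset.sum_nonneg fun n _ => abs_nonneg _
    set A : Finset ℕ → Finset (Fin k) :=
      fun F => Finset.univ.filter (fun j : Fin k => ∃ n ∈ F, u (j:ℕ) n ≠ 0) with hAdef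
    have ht0 : ∀ F (j : Fin k), j ∉ A F → t F j = 0 := by
      intro F j hj
      refine Finset.sum_eq_zero fun n hn => ?_
      rw [abs_eq_zero]
      by_contra hne
      exact hj (Finset.mem_filter.2 ⟨Finset.mem_univ _, ⟨n, hn, hne⟩⟩)
    have hxabs : ∀ n, |x n| = ∑ j : Fin k, |α j| * |u (j:ℕ) n| := by
      intro n
      have hxn : x n = ∑ j : Fin k, α j * u (j:ℕ) n := by
        rw [hxdef, Finset.sum_apply]
        exact Finset.sum_congr rfl fun j _ => by rw [Pi.smul_apply, smul_eq_mul]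
      by_cases h : ∃ j : Fin k, u (j:ℕ) n ≠ 0
      · obtain ⟨j0, hj0⟩ := h
        have hz : ∀ b : Fin k, b ≠ j0 → u (b:ℕ) n = 0 := by
          intro b hb
          by_contra hbne
          exact hb (Fin.ext (huniq n b j0 hbne hj0))
        rw [hxn, Finset.sum_eq_single_of_mem j0 (Finset.mem_univ _)
          (fun b _ hb => by rw [hz b hb, mul_zero])]
        rw [Finset.sum_eq_single_of_mem j0 (Finset.mem_univ _)
          (fun b _ hb => by rw [hz b hb, abs_zero, mul_zero])]
        rw [abs_mul]
      · push_neg at h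
        rw [hxn, Finset.sum_eq_zero fun j _ => by rw [h j, mul_zero],
          Finset.sum_eq_zero fun j _ => by rw [h j, abs_zero, mul_zero], abs_zero]
    have hS : ∀ F : Finset ℕ, ∑ n ∈ F, |x n| = ∑ j ∈ A F, |α j| * t F j := by
      intro F
      calc ∑ n ∈ F, |x n| = ∑ n ∈ F, ∑ j : Fin k, |α j| * |u (j:ℕ) n| :=
            Finset.sum_congr rfl fun n _ => hxabs n
        _ = ∑ j : Fin k, ∑ n ∈ F, |α j| * |u (j:ℕ) n| := Finset.sum_comm
        _ = ∑ j : Fin k, |α j| * t F j :=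
            Finset.sum_congr rfl fun j _ => (Finset.mul_sum _ _ _).symm
        _ = ∑ j ∈ A F, |α j| * t F j := by
            refine (Finset.sum_subset (Finset.subset_univ _) ?_).symm
            intro j _ hj
            rw [ht0 F j hj, mul_zero]
    have ht1 : ∀ F ∈ C, ∀ j : Fin k, t F j ≤ 1 := by
      intro F hF j
      obtain ⟨hne, hSch⟩ := hC.1 F hF
      have hch := singleton_chain hne hSch
      have h1 := chain_psum_le_norm p hp0 (u (j:ℕ)) (hfin _).toFinset
        (fun n hn => (hfin _).mem_toFinset.2 hn) hch
      rw [hnorm, Real.one_rpow, Finset.sum_singleton] at h1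
      have h2 : ((t F j) ^ p) ^ ((1:ℝ)/p) ≤ (1:ℝ) ^ ((1:ℝ)/p) :=
        Real.rpow_le_rpow (Real.rpow_nonneg (ht_nonneg F j) _) h1 (by positivity)
      rwa [Real.one_rpow, one_div, Real.rpow_rpow_inv (ht_nonneg F j) (ne_of_gt hp0)] at h2
    have hcol : ∀ j : Fin k, ∑ F ∈ C, (t F j) ^ p ≤ 1 := by
      intro j
      set g : Finset ℕ → Finset ℕ := fun F => F.filter (fun n => u (j:ℕ) n ≠ 0) with hg
      set Cj := C.filter (fun F => (g F).Nonempty) with hCj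
      have htg : ∀ F, t F j = ∑ n ∈ g F, |u (j:ℕ) n| := by
        intro F
        refine (Finset.sum_subset (Finset.filter_subset _ _) ?_).symm
        intro n hn hn'
        rw [abs_eq_zero]
        by_contra hne
        exact hn' (Finset.mem_filter.2 ⟨hn, hne⟩)
      have h1 : ∑ F ∈ C, (t F j) ^ p = ∑ F ∈ Cj, (t F j) ^ p := by
        refine (Finset.sum_subset (Finset.filter_subset _ _) ?_).symm
        intro F hF hF'
        have hemp : g F = ∅ := by
          rw [← Finset.not_nonempty_iff_eq_empty]
          intro hne
          exact hF' (Finset.mem_filter.2 ⟨hF, hne⟩)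
        rw [htg F, hemp, Finset.sum_empty, Real.zero_rpow (ne_of_gt hp0)]
      have hginj : ∀ F ∈ Cj, ∀ F' ∈ Cj, g F = g F' → F = F' := by
        intro F hF F' hF' hgeq
        rw [hCj, Finset.mem_filter] at hF hF'
        by_contra hne
        have hd := chain_disjoint hC hF.1 hF'.1 hne
        obtain ⟨n, hn⟩ := hF.2
        have hn1 : n ∈ F := Finset.mem_of_mem_filter _ hn
        have hn2 : n ∈ g F' := hgeq ▸ hn
        exact Finset.disjoint_left.1 hd hn1 (Finset.mem_of_mem_filter _ hn2)
      have hchain : IsSchreierChain (Cj.image g) := by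
        constructor
        · intro G hG
          obtain ⟨F, hF, rfl⟩ := Finset.mem_image.1 hG
          rw [hCj, Finset.mem_filter] at hF
          exact ⟨hF.2, isSchreier_subset (Finset.filter_subset _ _) (hC.1 F hF.1).2⟩
        · intro G hG G' hG' hne
          obtain ⟨F, hF, rfl⟩ := Finset.mem_image.1 hG
          obtain ⟨F', hF', rfl⟩ := Finset.mem_image.1 hG'
          have hFne : F ≠ F' := fun h => hne (by rw [h])
          rw [hCj, Finset.mem_filter] at hF hF'
          rcases hC.2 F hF.1 F' hF'.1 hFne with h | h
          · exact Or.inl fun a ha b hb =>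
              h a (Finset.mem_of_mem_filter _ ha) b (Finset.mem_of_mem_filter _ hb)
          · exact Or.inr fun a ha b hb =>
              h a (Finset.mem_of_mem_filter _ ha) b (Finset.mem_of_mem_filter _ hb)
      have h2 : ∑ F ∈ Cj, (t F j) ^ p = ∑ G ∈ Cj.image g, (∑ n ∈ G, |u (j:ℕ) n|) ^ p := by
        rw [Finset.sum_image hginj]
        exact Finset.sum_congr rfl fun F _ => by rw [htg F]
      have h3 := chain_psum_le_norm p hp0 (u (j:ℕ)) (hfin _).toFinset
        (fun n hn => (hfin _).mem_toFinset.2 hn) hchain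
      rw [hnorm, Real.one_rpow] at h3
      rw [h1, h2]
      exact h3
    -- witness elements
    set w : Finset ℕ → Fin k → ℕ := fun F j =>
      if h : (F.filter (fun n => u (j:ℕ) n ≠ 0)).Nonempty
      then (F.filter (fun n => u (j:ℕ) n ≠ 0)).min' h else 0 with hwdef
    have hw_spec : ∀ F, ∀ j ∈ A F, w F j ∈ F ∧ u (j:ℕ) (w F j) ≠ 0 := by
      intro F j hj
      rw [hAdef, Finset.mem_filter] at hj
      obtain ⟨-, n, hn, hune⟩ := hj
      have hne : (F.filter (fun n => u (j:ℕ) n ≠ 0)).Nonempty :=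
        ⟨n, Finset.mem_filter.2 ⟨hn, hune⟩⟩
      have hmem := Finset.min'_mem _ hne
      rw [Finset.mem_filter] at hmem
      have : w F j = (F.filter (fun n => u (j:ℕ) n ≠ 0)).min' hne := by
        rw [hwdef]; exact dif_pos hne
      rw [this]
      exact hmem
    have hcardA : ∀ F, (A F).card ≤ F.card := by
      intro F
      refine Finset.card_le_card_of_injOn (w F)
        (fun j hj => (hw_spec F j hj).1) ?_
      intro j hj j' hj' heq
      have h1 := (hw_spec F j (Finset.mem_coe.1 hj)).2
      have h2 := (hw_spec F j' (Finset.mem_coe.1 hj')).2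
      rw [heq] at h1
      exact Fin.ext (huniq _ _ _ h1 h2)
    have horder : ∀ F ∈ C, ∀ F' ∈ C, FinsetLT F F' →
        ∀ j ∈ A F, ∀ j' ∈ A F', (j:ℕ) ≤ (j':ℕ) := by
      intro F hF F' hF' hLT j hj j' hj'
      by_contra hc
      push_neg at hc
      have h1 := hw_spec F j hj
      have h2 := hw_spec F' j' hj'
      have h3 : w F j < w F' j' := hLT _ h1.1 _ h2.1
      have h4 : w F' j' < w F j := hsupp_lt hc _ h2.2 _ h1.2
      omega
    -- the associated sets of maxima
    set GG : Finset ℕ → Finset ℕ := fun F => (A F).image (fun j : Fin k => m (j:ℕ)) with hGGdef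
    have hGGcard : ∀ F, (GG F).card = (A F).card := fun F =>
      Finset.card_image_of_injOn (fun j _ j' _ h => Fin.ext (hm.injective h))
    have hGGne : ∀ F, (A F).Nonempty → (GG F).Nonempty := fun F h => h.image _
    have hGGschreier : ∀ F ∈ C, IsSchreier (GG F) := by
      intro F hF hne
      obtain ⟨j, hj, hminj⟩ := Finset.mem_image.1 (Finset.min'_mem _ hne)
      obtain ⟨hneF, hSch⟩ := hC.1 F hF
      have h1 := hw_spec F j hj
      calc (GG F).card = (A F).card := hGGcard F
        _ ≤ F.card := hcardA F
        _ ≤ F.min' hneF := hSch hneF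
        _ ≤ w F j := Finset.min'_le _ _ h1.1
        _ ≤ m (j:ℕ) := (hmax _).2 h1.2
        _ = (GG F).min' hne := hminj
    have hSleq : ∀ F ∈ C, ∑ n ∈ F, |x n| ≤ ∑ n ∈ GG F, |y n| := by
      intro F hF
      rw [hS F]
      have h1 : ∑ n ∈ GG F, |y n| = ∑ j ∈ A F, |α j| := by
        rw [hGGdef, Finset.sum_image (fun j _ j' _ h => Fin.ext (hm.injective h))]
        exact Finset.sum_congr rfl fun j _ => by rw [hy_eval j]
      rw [h1]
      refine Finset.sum_le_sum fun j hj => ?_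
      calc |α j| * t F j ≤ |α j| * 1 :=
            mul_le_mul_of_nonneg_left (ht1 F hF j) (abs_nonneg _)
        _ = |α j| := mul_one _
    -- bound on the p-sum of coefficients
    have halpha : ∑ j : Fin k, |α j| ^ p ≤ (baernsteinNorm p y) ^ p := by
      set D := (Finset.univ : Finset (Fin k)).image (fun j : Fin k => ({m (j:ℕ)} : Finset ℕ))
        with hDdef
      have hsinj : ∀ j ∈ (Finset.univ : Finset (Fin k)), ∀ j' ∈ (Finset.univ : Finset (Fin k)),
          ({m (j:ℕ)} : Finset ℕ) = {m (j':ℕ)} → j = j' := by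
        intro j _ j' _ h
        exact Fin.ext (hm.injective (Finset.singleton_injective h))
      have hchain : IsSchreierChain D := by
        constructor
        · intro G hG
          obtain ⟨j, -, rfl⟩ := Finset.mem_image.1 hG
          refine ⟨Finset.singleton_nonempty _, fun h => ?_⟩
          rw [Finset.card_singleton, Finset.min'_singleton]
          exact hm1 _
        · intro G hG G' hG' hne
          obtain ⟨j, -, rfl⟩ := Finset.mem_image.1 hG
          obtain ⟨j', -, rfl⟩ := Finset.mem_image.1 hG'
          have hne2 : m (j:ℕ) ≠ m (j':ℕ) := fun h => hne (by rw [h])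
          rcases lt_or_gt_of_ne hne2 with h | h
          · refine Or.inl fun a ha b hb => ?_
            rw [Finset.mem_singleton] at ha hb
            rw [ha, hb]; exact h
          · refine Or.inr fun a ha b hb => ?_
            rw [Finset.mem_singleton] at ha hb
            rw [ha, hb]; exact h
      have hval := chain_psum_le_norm p hp0 y Sy hysupp hchain
      rw [hDdef, Finset.sum_image hsinj] at hval
      calc ∑ j : Fin k, |α j| ^ p
          = ∑ j : Fin k, (∑ n ∈ ({m (j:ℕ)} : Finset ℕ), |y n|) ^ p := by
            refine Finset.sum_congr rfl fun j _ => ?_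
            rw [Finset.sum_singleton, hy_eval j]
        _ ≤ (baernsteinNorm p y) ^ p := hval
    -- split the chain
    set C2 := C.filter (fun F => ¬ (A F).card ≤ 1) with hC2def
    -- budget 1 : sets meeting at most one block
    have hb1 : ∑ F ∈ C.filter (fun F => (A F).card ≤ 1), (∑ n ∈ F, |x n|) ^ p
        ≤ (baernsteinNorm p y) ^ p := by
      set C1 := C.filter (fun F => (A F).card ≤ 1) with hC1def
      have hstep : ∀ F ∈ C1, (∑ n ∈ F, |x n|) ^ p ≤ ∑ j : Fin k, |α j| ^ p * (t F j) ^ p := by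
        intro F hF
        rw [hC1def, Finset.mem_filter] at hF
        have hRHSnn : ∀ j : Fin k, 0 ≤ |α j| ^ p * t F j ^ p := fun j =>
          mul_nonneg (Real.rpow_nonneg (abs_nonneg _) _)
            (Real.rpow_nonneg (ht_nonneg F j) _)
        rcases Nat.le_one_iff_eq_zero_or_eq_one.1 hF.2 with h0 | h1
        · rw [hS F, Finset.card_eq_zero.1 h0, Finset.sum_empty,
            Real.zero_rpow (ne_of_gt hp0)]
          exact Finset.sum_nonneg fun j _ => hRHSnn j
        · obtain ⟨j0, hj0⟩ := Finset.card_eq_one.1 h1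
          rw [hS F, hj0, Finset.sum_singleton,
            Real.mul_rpow (abs_nonneg _) (ht_nonneg F j0)]
          exact Finset.single_le_sum (f := fun j => |α j| ^ p * t F j ^ p)
            (fun j _ => hRHSnn j) (Finset.mem_univ j0)
      calc ∑ F ∈ C1, (∑ n ∈ F, |x n|) ^ p
          ≤ ∑ F ∈ C1, ∑ j : Fin k, |α j| ^ p * (t F j) ^ p := Finset.sum_le_sum hstep
        _ = ∑ j : Fin k, ∑ F ∈ C1, |α j| ^ p * (t F j) ^ p := Finset.sum_comm
        _ = ∑ j : Fin k, |α j| ^ p * ∑ F ∈ C1, (t F j) ^ p :=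
            Finset.sum_congr rfl fun j _ => (Finset.mul_sum _ _ _).symm
        _ ≤ ∑ j : Fin k, |α j| ^ p * 1 := by
            refine Finset.sum_le_sum fun j _ => ?_
            refine mul_le_mul_of_nonneg_left ?_ (Real.rpow_nonneg (abs_nonneg _) _)
            refine le_trans ?_ (hcol j)
            exact Finset.sum_le_sum_of_subset_of_nonneg (Finset.filter_subset _ _)
              (fun F _ _ => Real.rpow_nonneg (ht_nonneg F j) _)
        _ = ∑ j : Fin k, |α j| ^ p := by
            exact Finset.sum_congr rfl fun j _ => mul_one _
        _ ≤ (baernsteinNorm p y) ^ p := halpha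
    -- the key claim for families with no shared blocks
    have hkey : ∀ P : Finset (Finset ℕ), P ⊆ C2 → (∀ F ∈ P, ∀ F' ∈ P, FinsetLT F F' →
        ∀ j : Fin k, j ∈ A F → j ∈ A F' → False) →
        ∑ F ∈ P, (∑ n ∈ F, |x n|) ^ p ≤ (baernsteinNorm p y) ^ p := by
      intro P hPsub hshare
      have hPC : ∀ F ∈ P, F ∈ C := fun F hF => Finset.mem_of_mem_filter _ (hPsub hF)
      have hP2 : ∀ F ∈ P, 2 ≤ (A F).card := by
        intro F hF
        have := (Finset.mem_filter.1 (hPsub hF)).2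
        omega
      have hAne : ∀ F ∈ P, (A F).Nonempty := fun F hF =>
        Finset.card_pos.1 (by have := hP2 F hF; omega)
      have hLTGG : ∀ F ∈ P, ∀ F' ∈ P, FinsetLT F F' → FinsetLT (GG F) (GG F') := by
        intro F hF F' hF' hLT a ha b hb
        obtain ⟨j, hj, rfl⟩ := Finset.mem_image.1 ha
        obtain ⟨j', hj', rfl⟩ := Finset.mem_image.1 hb
        have hle : (j:ℕ) ≤ (j':ℕ) := horder F (hPC F hF) F' (hPC F' hF') hLT j hj j' hj'
        have hne2 : (j:ℕ) ≠ (j':ℕ) := by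
          intro h
          exact hshare F hF F' hF' hLT j hj (by rw [show j = j' from Fin.ext h]; exact hj')
        exact hm (lt_of_le_of_ne hle hne2)
      have hGGinj : ∀ F ∈ P, ∀ F' ∈ P, GG F = GG F' → F = F' := by
        intro F hF F' hF' heq
        by_contra hne
        rcases hC.2 F (hPC F hF) F' (hPC F' hF') hne with h | h
        · have hlt := hLTGG F hF F' hF' h
          obtain ⟨a, ha⟩ := hGGne F (hAne F hF)
          exact lt_irrefl a (hlt a ha a (heq ▸ ha))
        · have hlt := hLTGG F' hF' F hF h
          obtain ⟨a, ha⟩ := hGGne F (hAne F hF)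
          exact lt_irrefl a (hlt a (heq ▸ ha) a ha)
      have hchain : IsSchreierChain (P.image GG) := by
        constructor
        · intro G hG
          obtain ⟨F, hF, rfl⟩ := Finset.mem_image.1 hG
          exact ⟨hGGne F (hAne F hF), hGGschreier F (hPC F hF)⟩
        · intro G hG G' hG' hne
          obtain ⟨F, hF, rfl⟩ := Finset.mem_image.1 hG
          obtain ⟨F', hF', rfl⟩ := Finset.mem_image.1 hG'
          have hFne : F ≠ F' := fun h => hne (by rw [h])
          rcases hC.2 F (hPC F hF) F' (hPC F' hF') hFne with h | h
          · exact Or.inl (hLTGG F hF F' hF' h)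
          · exact Or.inr (hLTGG F' hF' F hF h)
      calc ∑ F ∈ P, (∑ n ∈ F, |x n|) ^ p
          ≤ ∑ F ∈ P, (∑ n ∈ GG F, |y n|) ^ p := by
            refine Finset.sum_le_sum fun F hF => ?_
            exact Real.rpow_le_rpow (Finset.sum_nonneg fun n _ => abs_nonneg _)
              (hSleq F (hPC F hF)) (le_of_lt hp0)
        _ = ∑ G ∈ P.image GG, (∑ n ∈ G, |y n|) ^ p := by rw [Finset.sum_image hGGinj]
        _ ≤ (baernsteinNorm p y) ^ p := chain_psum_le_norm p hp0 y Sy hysupp hchain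
    -- the rank of a set in C2
    set rank : Finset ℕ → ℕ := fun F => (C2.filter (fun G => FinsetLT G F)).card with hrankdef
    have hshare_rank : ∀ F ∈ C2, ∀ F' ∈ C2, FinsetLT F F' →
        (∃ j : Fin k, j ∈ A F ∧ j ∈ A F') → rank F' = rank F + 1 := by
      intro F hF F' hF' hLT ⟨j, hjF, hjF'⟩
      have hFC : F ∈ C := Finset.mem_of_mem_filter _ hF
      have hF'C : F' ∈ C := Finset.mem_of_mem_filter _ hF'
      have hFne : F.Nonempty := (hC.1 F hFC).1
      have hFnotlt : ¬ FinsetLT F F := by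
        intro h
        obtain ⟨a, ha⟩ := hFne
        exact lt_irrefl a (h a ha a ha)
      have hset : C2.filter (fun G => FinsetLT G F') = insert F (C2.filter (fun G => FinsetLT G F)) := by
        ext G
        simp only [Finset.mem_insert, Finset.mem_filter]
        constructor
        · rintro ⟨hGC2, hGlt⟩
          by_cases hGF : G = F
          · exact Or.inl hGF
          have hGC : G ∈ C := Finset.mem_of_mem_filter _ hGC2
          rcases hC.2 G hGC F hFC hGF with h | h
          · exact Or.inr ⟨hGC2, h⟩
          · -- F < G < F' : G's blocks are squeezed to {j}
            exfalso
            have hG2 : 2 ≤ (A G).card := by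
              have := (Finset.mem_filter.1 hGC2).2
              omega
            have hAGsub : A G ⊆ {j} := by
              intro j'' hj''
              have h1 : (j:ℕ) ≤ (j'':ℕ) := horder F hFC G hGC h j hjF j'' hj''
              have h2 : (j'':ℕ) ≤ (j:ℕ) := horder G hGC F' hF'C hGlt j'' hj'' j hjF'
              rw [Finset.mem_singleton]
              exact Fin.ext (le_antisymm h2 h1)
            have := Finset.card_le_card hAGsub
            rw [Finset.card_singleton] at this
            omega
        · rintro (rfl | ⟨hGC2, hGlt⟩)
          · exact ⟨hF, hLT⟩
          · refine ⟨hGC2, fun a ha b hb => ?_⟩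
            obtain ⟨c, hc⟩ := hFne
            exact lt_trans (hGlt a ha c hc) (hLT c hc b hb)
      show (C2.filter (fun G => FinsetLT G F')).card = (C2.filter (fun G => FinsetLT G F)).card + 1
      rw [hset, Finset.card_insert_of_notMem (by
        intro hmem
        exact hFnotlt (Finset.mem_filter.1 hmem).2)]
    -- no sharing within a parity class
    have hnoshareE : ∀ F ∈ C2.filter (fun F => Even (rank F)),
        ∀ F' ∈ C2.filter (fun F => Even (rank F)), FinsetLT F F' →
        ∀ j : Fin k, j ∈ A F → j ∈ A F' → False := by
      intro F hF F' hF' hLT j hjF hjF'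
      rw [Finset.mem_filter] at hF hF'
      have hr := hshare_rank F hF.1 F' hF'.1 hLT ⟨j, hjF, hjF'⟩
      have h2 := hF'.2
      rw [hr, Nat.even_add_one] at h2
      exact h2 hF.2
    have hnoshareO : ∀ F ∈ C2.filter (fun F => ¬ Even (rank F)),
        ∀ F' ∈ C2.filter (fun F => ¬ Even (rank F)), FinsetLT F F' →
        ∀ j : Fin k, j ∈ A F → j ∈ A F' → False := by
      intro F hF F' hF' hLT j hjF hjF'
      rw [Finset.mem_filter] at hF hF'
      have hr := hshare_rank F hF.1 F' hF'.1 hLT ⟨j, hjF, hjF'⟩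
      have h2 := hF'.2
      rw [hr] at h2
      exact h2 (Nat.even_add_one.2 hF.2)
    -- assemble
    have hsplit1 := Finset.sum_filter_add_sum_filter_not C (fun F => (A F).card ≤ 1)
      (fun F => (∑ n ∈ F, |x n|) ^ p)
    have hsplit2 := Finset.sum_filter_add_sum_filter_not C2 (fun F => Even (rank F))
      (fun F => (∑ n ∈ F, |x n|) ^ p)
    have hbE := hkey (C2.filter (fun F => Even (rank F))) (Finset.filter_subset _ _) hnoshareE
    have hbO := hkey (C2.filter (fun F => ¬ Even (rank F))) (Finset.filter_subset _ _) hnoshareO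
    have hC2le : ∑ F ∈ C2, (∑ n ∈ F, |x n|) ^ p ≤ 2 * (baernsteinNorm p y) ^ p := by
      rw [← hsplit2]
      linarith
    rw [← hsplit1]
    have hb1' := hb1
    linarith
  refine ciSup_le fun C => ?_
  have h1 := hmain C.1 C.2
  have h2 : (∑ F ∈ C.1, (∑ n ∈ F, |x n|) ^ p) ^ ((1:ℝ)/p)
      ≤ (3 * (baernsteinNorm p y) ^ p) ^ ((1:ℝ)/p) := by
    refine Real.rpow_le_rpow ?_ h1 (by positivity)
    exact Finset.sum_nonneg fun F _ =>
      Real.rpow_nonneg (Finset.sum_nonneg fun n _ => abs_nonneg _) _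
  calc (∑ F ∈ C.1, (∑ n ∈ F, |x n|) ^ p) ^ ((1:ℝ)/p)
      ≤ (3 * (baernsteinNorm p y) ^ p) ^ ((1:ℝ)/p) := h2
    _ = 3 ^ ((1:ℝ)/p) * baernsteinNorm p y := by
        rw [Real.mul_rpow (by norm_num) (Real.rpow_nonneg hNy _), one_div,
          Real.rpow_rpow_inv hNy (ne_of_gt hp0)]
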